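/- Let α_1,…,α_n ∈ F_q be distinct, h(z) = Π(z-α_i), and s(z), t(z) ∈ F_q[z] with s(α_i), t(α_i) ≠ 0 for all i and s(α_i)t(α_i) = h'(α_i) for all i. Let v_i = s(α_i)^{-1}. Then a vector (v_1 f(α_1),…,v_n f(α_n)) with deg f ≤ k-1 lies in Hull(GRS_k(α, v)) if and only if there exists g(z) ∈ F_q[z] with deg g ≤ n-k-1 such that h(z) divides f(z)t(z) - g(z)s(z). -/

import Mathlib

open Polynomial Finset

/-- The Euclidean dual code of a linear code `C ⊆ F^n`. -/
def dualCode {F : Type*} [Field F] {n : ℕ} (C : Submodule F (Fin n → F)) :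
    Submodule F (Fin n → F) where
  carrier := {x | ∀ y ∈ C, ∑ i, x i * y i = 0}
  add_mem' := by
    intro a b ha hb y hy
    simp only [Set.mem_setOf_eq, Pi.add_apply, add_mul] at *
    rw [Finset.sum_add_distrib, ha y hy, hb y hy, add_zero]
  zero_mem' := by intro y hy; simp
  smul_mem' := by
    intro c a ha y hy
    simp only [Set.mem_setOf_eq, Pi.smul_apply, smul_eq_mul, mul_assoc] at *
    rw [← Finset.mul_sum, ha y hy, mul_zero]

/-- The generalized Reed–Solomon code `GRS_k(α, v)`. -/
def GRSCode {F : Type*} [Field F] {n : ℕ} (k : ℕ) (α v : Fin n → F) :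
    Submodule F (Fin n → F) where
  carrier := {c | ∃ f : Polynomial F, f.degree < k ∧ c = fun i => v i * f.eval (α i)}
  add_mem' := by
    rintro a b ⟨f, hf, rfl⟩ ⟨g, hg, rfl⟩
    exact ⟨f + g, lt_of_le_of_lt (Polynomial.degree_add_le f g) (max_lt hf hg),
      by funext i; simp [mul_add]⟩
  zero_mem' := ⟨0, by rw [Polynomial.degree_zero]; exact bot_lt_iff_ne_bot.mpr (by simp), by funext i; simp⟩
  smul_mem' := by
    rintro c a ⟨f, hf, rfl⟩
    exact ⟨c • f, lt_of_le_of_lt (Polynomial.degree_smul_le c f) hf,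
      by funext i; simp [Polynomial.eval_smul]; ring⟩



lemma withBot_lt_coe_iff {a : WithBot ℕ} {m : ℕ} (hm : 1 ≤ m) :
    a < (m : WithBot ℕ) ↔ a ≤ ((m - 1 : ℕ) : WithBot ℕ) := by
  cases a with
  | bot =>
    constructor <;> intro _
    · exact bot_le
    · rw [Nat.cast_withBot]; exact WithBot.bot_lt_coe _
  | coe x =>
    rw [Nat.cast_withBot, Nat.cast_withBot, WithBot.coe_lt_coe, WithBot.coe_le_coe]
    omega

lemma coeff_basis_eq {F : Type*} [Field F] {n : ℕ} (α : Fin n → F)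
    (hα : Function.Injective α) (i : Fin n) :
    (Lagrange.basis Finset.univ α i).coeff (n - 1) = Lagrange.nodalWeight Finset.univ α i := by
  have hinj : Set.InjOn α (Finset.univ : Finset (Fin n)) := hα.injOn
  have hd := Lagrange.natDegree_basis hinj (Finset.mem_univ i)
  rw [Finset.card_univ, Fintype.card_fin] at hd
  rw [← hd, Polynomial.coeff_natDegree, Lagrange.basis, Polynomial.leadingCoeff_prod,
    Lagrange.nodalWeight]
  refine Finset.prod_congr rfl fun j hj => ?_
  rw [Lagrange.basisDivisor, Polynomial.leadingCoeff_mul, Polynomial.leadingCoeff_C,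
    (Polynomial.monic_X_sub_C _).leadingCoeff, mul_one]

lemma sum_eval_div_deriv {F : Type*} [Field F] {n : ℕ} (α : Fin n → F)
    (hα : Function.Injective α) (Q : Polynomial F) (hQ : Q.degree < (n : WithBot ℕ)) :
    ∑ i, Q.eval (α i) *
      ((Polynomial.derivative (Lagrange.nodal Finset.univ α)).eval (α i))⁻¹ = Q.coeff (n - 1) := by
  classical
  have hinj : Set.InjOn α (Finset.univ : Finset (Fin n)) := hα.injOn
  have hQ' : Q = Lagrange.interpolate Finset.univ α (fun i => Q.eval (α i)) :=
    Lagrange.eq_interpolate hinj (by simpa using hQ)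
  conv_rhs => rw [hQ']
  rw [Lagrange.interpolate_apply, Polynomial.finset_sum_coeff]
  refine Finset.sum_congr rfl fun i _ => ?_
  rw [Polynomial.coeff_C_mul, coeff_basis_eq α hα i,
    Lagrange.nodalWeight_eq_eval_derivative_nodal (Finset.mem_univ i)]

lemma dvd_iff_eval_zero {F : Type*} [Field F] {n : ℕ} (α : Fin n → F)
    (hα : Function.Injective α) (P : Polynomial F) :
    (∏ i, (X - C (α i))) ∣ P ↔ ∀ i, P.eval (α i) = 0 := by
  constructor
  · rintro ⟨q, rfl⟩ i
    rw [Polynomial.eval_mul, Polynomial.eval_prod,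
      Finset.prod_eq_zero (Finset.mem_univ i) (by simp), zero_mul]
  · intro hP
    exact Fintype.prod_dvd_of_coprime (Polynomial.pairwise_coprime_X_sub_C hα)
      (fun i => Polynomial.dvd_iff_isRoot.mpr (hP i))

theorem mem_hull_iff_exists_g {F : Type*} [Field F] {n : ℕ}
    (α : Fin n → F) (hα : Function.Injective α)
    (h : Polynomial F) (hh : h = ∏ i, (Polynomial.X - Polynomial.C (α i)))
    (s t : Polynomial F)
    (hs : ∀ i, s.eval (α i) ≠ 0) (ht : ∀ i, t.eval (α i) ≠ 0)
    (hst : ∀ i, s.eval (α i) * t.eval (α i) = (Polynomial.derivative h).eval (α i))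
    (v : Fin n → F) (hv : ∀ i, v i = (s.eval (α i))⁻¹)
    (k : ℕ) (hk : 1 ≤ k) (hkn : k < n)
    (f : Polynomial F) (hf : f.degree < k) :
    (fun i => v i * f.eval (α i)) ∈ GRSCode k α v ⊓ dualCode (GRSCode k α v) ↔
      ∃ g : Polynomial F, g.degree < ((n - k : ℕ) : WithBot ℕ) ∧ h ∣ f * t - g * s := by
  classical
  have hinj : Set.InjOn α (Finset.univ : Finset (Fin n)) := hα.injOn
  have hnodal : h = Lagrange.nodal Finset.univ α := by rw [hh, Lagrange.nodal_eq]
  have hderiv : ∀ i, (Polynomial.derivative h).eval (α i) ≠ 0 := fun i => by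
    rw [← hst i]; exact mul_ne_zero (hs i) (ht i)
  set γ : Fin n → F := fun i => f.eval (α i) * t.eval (α i) * (s.eval (α i))⁻¹ with hγ
  set B : Polynomial F := Lagrange.interpolate Finset.univ α γ with hB
  have hBeval : ∀ i, B.eval (α i) = γ i := fun i =>
    Lagrange.eval_interpolate_at_node γ hinj (Finset.mem_univ i)
  have hBdeg : B.degree < (n : WithBot ℕ) := by
    simpa [hB] using Lagrange.degree_interpolate_lt γ hinj
  -- Step 1 : LHS ↔ orthogonality sums
  have iff1 : ((fun i => v i * f.eval (α i)) ∈ GRSCode k α v ⊓ dualCode (GRSCode k α v)) ↔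
      ∀ p : Polynomial F, p.degree < k →
        ∑ i, γ i * ((Polynomial.derivative h).eval (α i))⁻¹ * p.eval (α i) = 0 := by
    have hterm : ∀ (p : Polynomial F) (i : Fin n),
        (v i * f.eval (α i)) * (v i * p.eval (α i)) =
          γ i * ((Polynomial.derivative h).eval (α i))⁻¹ * p.eval (α i) := by
      intro p i
      have hsi := hs i
      have hti := ht i
      rw [hv i, ← hst i, hγ]
      field_simp
    constructor
    · rintro ⟨-, hdual⟩ p hp
      have := hdual (fun i => v i * p.eval (α i)) ⟨p, hp, rfl⟩
      rw [← this]
      exact (Finset.sum_congr rfl fun i _ => (hterm p i).symm)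
    · intro H
      refine ⟨⟨f, hf, rfl⟩, ?_⟩
      rintro y ⟨p, hp, rfl⟩
      rw [show ∑ i, (v i * f.eval (α i)) * (v i * p.eval (α i)) =
          ∑ i, γ i * ((Polynomial.derivative h).eval (α i))⁻¹ * p.eval (α i) from
        Finset.sum_congr rfl fun i _ => hterm p i]
      exact H p hp
  -- Step 2 : orthogonality ↔ degree bound on B
  have iff2 : (∀ p : Polynomial F, p.degree < k →
        ∑ i, γ i * ((Polynomial.derivative h).eval (α i))⁻¹ * p.eval (α i) = 0) ↔
      B.degree < ((n - k : ℕ) : WithBot ℕ) := by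
    constructor
    · intro H
      by_contra hc
      push_neg at hc
      have hBne : B ≠ 0 := by
        intro hB0
        rw [hB0, Polynomial.degree_zero] at hc
        exact absurd hc (not_le.mpr (by rw [Nat.cast_withBot]; exact WithBot.bot_lt_coe _))
      have hd : B.degree = (B.natDegree : WithBot ℕ) := Polynomial.degree_eq_natDegree hBne
      have hdk : n - k ≤ B.natDegree := by
        rw [hd, Nat.cast_withBot, Nat.cast_withBot, WithBot.coe_le_coe] at hc; exact hc
      have hdn : B.natDegree < n := by
        rw [hd, Nat.cast_withBot, Nat.cast_withBot, WithBot.coe_lt_coe] at hBdeg; exact hBdeg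
      set e : ℕ := n - 1 - B.natDegree with he
      have hek : e < k := by omega
      have hsum := H (X ^ e) (by
        rw [Polynomial.degree_X_pow, Nat.cast_withBot, Nat.cast_withBot, WithBot.coe_lt_coe]
        exact hek)
      have hQdeg : (B * X ^ e).degree < (n : WithBot ℕ) := by
        rw [Polynomial.degree_mul, Polynomial.degree_X_pow, hd, Nat.cast_withBot,
          Nat.cast_withBot, Nat.cast_withBot, ← WithBot.coe_add, WithBot.coe_lt_coe]
        omega
      have hL1 := sum_eval_div_deriv α hα (B * X ^ e) hQdeg
      rw [← hnodal] at hL1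
      have hL2 : ∑ i, (B * X ^ e).eval (α i) *
          ((Polynomial.derivative h).eval (α i))⁻¹ =
          ∑ i, γ i * ((Polynomial.derivative h).eval (α i))⁻¹ *
            (X ^ e : Polynomial F).eval (α i) := by
        refine Finset.sum_congr rfl fun i _ => ?_
        rw [Polynomial.eval_mul, hBeval i]
        ring
      rw [hL2, hsum] at hL1
      have hcoeff : (B * X ^ e).coeff (n - 1) = B.leadingCoeff := by
        have hne : n - 1 = B.natDegree + e := by omega
        rw [hne, Polynomial.coeff_mul_X_pow, Polynomial.coeff_natDegree]
      rw [hcoeff] at hL1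
      exact Polynomial.leadingCoeff_ne_zero.mpr hBne hL1.symm
    · intro hdB p hp
      have hQdeg : (B * p).degree < ((n - 1 : ℕ) : WithBot ℕ) := by
        rcases eq_or_ne B 0 with hB0 | hB0
        · rw [hB0, zero_mul, Polynomial.degree_zero, Nat.cast_withBot]
          exact WithBot.bot_lt_coe _
        rcases eq_or_ne p 0 with hp0 | hp0
        · rw [hp0, mul_zero, Polynomial.degree_zero, Nat.cast_withBot]
          exact WithBot.bot_lt_coe _
        rw [Polynomial.degree_mul]
        have h1 : B.degree ≤ ((n - k - 1 : ℕ) : WithBot ℕ) :=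
          (withBot_lt_coe_iff (by omega)).mp hdB
        have h2 : p.degree ≤ ((k - 1 : ℕ) : WithBot ℕ) :=
          (withBot_lt_coe_iff hk).mp hp
        refine lt_of_le_of_lt (add_le_add h1 h2) ?_
        rw [Nat.cast_withBot, Nat.cast_withBot, Nat.cast_withBot, ← WithBot.coe_add,
          WithBot.coe_lt_coe]
        omega
      have hQn : (B * p).degree < (n : WithBot ℕ) := by
        refine lt_trans hQdeg ?_
        rw [Nat.cast_withBot, Nat.cast_withBot, WithBot.coe_lt_coe]
        omega
      have hL1 := sum_eval_div_deriv α hα (B * p) hQn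
      rw [← hnodal] at hL1
      have hL2 : ∑ i, (B * p).eval (α i) *
          ((Polynomial.derivative h).eval (α i))⁻¹ =
          ∑ i, γ i * ((Polynomial.derivative h).eval (α i))⁻¹ * p.eval (α i) := by
        refine Finset.sum_congr rfl fun i _ => ?_
        rw [Polynomial.eval_mul, hBeval i]
        ring
      rw [hL2] at hL1
      rw [hL1]
      exact Polynomial.coeff_eq_zero_of_degree_lt hQdeg
  -- Step 3 : RHS ↔ degree bound on B
  have iff3 : (∃ g : Polynomial F, g.degree < ((n - k : ℕ) : WithBot ℕ) ∧ h ∣ f * t - g * s) ↔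
      B.degree < ((n - k : ℕ) : WithBot ℕ) := by
    have hdvd : ∀ g : Polynomial F, (h ∣ f * t - g * s ↔ ∀ i, g.eval (α i) = γ i) := by
      intro g
      rw [hh, dvd_iff_eval_zero α hα]
      refine forall_congr' fun i => ?_
      rw [Polynomial.eval_sub, Polynomial.eval_mul, Polynomial.eval_mul, sub_eq_zero]
      show _ ↔ g.eval (α i) = f.eval (α i) * t.eval (α i) * (s.eval (α i))⁻¹
      rw [eq_mul_inv_iff_mul_eq₀ (hs i)]
      exact eq_comm
    constructor
    · rintro ⟨g, hg1, hg2⟩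
      rw [hdvd g] at hg2
      have hgB : g = B :=
        Lagrange.eq_interpolate_of_eval_eq γ hinj (by
          simp only [Finset.card_univ, Fintype.card_fin]
          refine lt_trans hg1 ?_
          rw [Nat.cast_withBot, Nat.cast_withBot, WithBot.coe_lt_coe]
          omega) (fun i _ => hg2 i)
      rwa [← hgB]
    · intro hdB
      exact ⟨B, hdB, (hdvd B).mpr hBeval⟩
  rw [iff1, iff2, iff3]
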